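/- In the Clifford Hayden–Preskill problem, for any Pauli operator Q_D on D, the probability of obtaining outcome |Q_D⟩ := (Q_D ⊗ I)|EPR⟩_{D\overline{D}} in the generalized Bell measurement on D \overline{D} equals N_{Q_D}/d_A^2, where N_{Q_D} is the number of Pauli operators P_A on A such that Λ_D(P_A) = Q_D (as projective Pauli operators). -/

import Mathlib

open Matrix Kronecker BigOperators

/-- The `n`-qubit Pauli operator `X^x Z^z` (symplectic representation). -/
noncomputable def pauli {n : ℕ} (x z : Fin n → ZMod 2) :
    Matrix (Fin n → ZMod 2) (Fin n → ZMod 2) ℂ :=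
  fun j k => if j = k + x then ((-1 : ℂ)) ^ (∑ i, (z i * k i).val) else 0

/-- The Yoshida–Kitaev doubled Hayden–Preskill state
`|Ψ'⟩ = (I_R ⊗ U_{AB} ⊗ Ū_{B̄A'} ⊗ I_{R̄})(|EPR⟩_{RA}|EPR⟩_{BB̄}|EPR⟩_{A'R̄})`,
with registers `(R, (C,D), (D̄,C̄), R̄)`; componentwise
`Ψ'(r,(c,d),(d̄,c̄),r̄) = (1/(d_A √d_B)) ∑_b U_{(c,d),(r,b)} conj U_{(c̄,d̄),(r̄,b)}`. -/
noncomputable def psiYK (nA nB nC nD : ℕ)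
    (U : Matrix ((Fin nC → ZMod 2) × (Fin nD → ZMod 2))
      ((Fin nA → ZMod 2) × (Fin nB → ZMod 2)) ℂ)
    (r : Fin nA → ZMod 2) (cd : (Fin nC → ZMod 2) × (Fin nD → ZMod 2))
    (dc : (Fin nD → ZMod 2) × (Fin nC → ZMod 2)) (rb : Fin nA → ZMod 2) : ℂ :=
  ((2 ^ nA : ℂ) * (Real.sqrt (2 ^ nB) : ℂ))⁻¹ *
    ∑ b : Fin nB → ZMod 2,
      U cd (r, b) * (starRingEnd ℂ) (U (dc.2, dc.1) (rb, b))


noncomputable def sg (a : ZMod 2) : ℂ := (-1) ^ a.val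

lemma sg_zero : sg 0 = 1 := by simp [sg]
lemma sg_one : sg 1 = -1 := by
  have : (1 : ZMod 2).val = 1 := rfl
  simp [sg, this]

lemma sg_add (a b : ZMod 2) : sg (a + b) = sg a * sg b := by
  have h2 : ((2:ZMod 2)) = 0 := rfl
  have h01 : ∀ a : ZMod 2, a = 0 ∨ a = 1 := by decide
  rcases h01 a with rfl | rfl <;> rcases h01 b with rfl | rfl <;>
    simp_all [sg_zero, sg_one, one_add_one_eq_two, h2]

lemma sg_natpow (m : ℕ) : ((-1 : ℂ)) ^ m = sg (m : ZMod 2) := by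
  rcases Nat.even_or_odd m with h | h
  · rw [h.neg_one_pow]
    have : ((m : ZMod 2)) = 0 := by
      rw [ZMod.natCast_eq_zero_iff]; exact h.two_dvd
    rw [this, sg_zero]
  · rw [h.neg_one_pow]
    have : ((m : ZMod 2)) = 1 := by
      rcases h with ⟨k, hk⟩; subst hk; push_cast
      have : ((2:ZMod 2)) = 0 := rfl
      rw [this]; ring
    rw [this, sg_one]

lemma val_cast (a : ZMod 2) : ((a.val : ℕ) : ZMod 2) = a := by
  fin_cases a <;> rfl

lemma sg_sum {n : ℕ} (f : Fin n → ZMod 2) :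
    ((-1 : ℂ)) ^ (∑ i, (f i).val) = sg (∑ i, f i) := by
  rw [sg_natpow]; congr 1; push_cast [val_cast]; rfl

lemma sg_mul_self (a : ZMod 2) : sg a * sg a = 1 := by
  have h01 : ∀ a : ZMod 2, a = 0 ∨ a = 1 := by decide
  rcases h01 a with rfl | rfl <;> simp [sg_zero, sg_one]

lemma conj_sg (a : ZMod 2) : (starRingEnd ℂ) (sg a) = sg a := by
  have h01 : ∀ a : ZMod 2, a = 0 ∨ a = 1 := by decide
  rcases h01 a with rfl | rfl <;> simp [sg_zero, sg_one]

lemma card_V (n : ℕ) : Fintype.card (Fin n → ZMod 2) = 2 ^ n := by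
  simp [Fintype.card_fun]

lemma sg_ortho {n : ℕ} (v : Fin n → ZMod 2) :
    ∑ z : Fin n → ZMod 2, sg (∑ i, z i * v i) = if v = 0 then (2 ^ n : ℂ) else 0 := by
  by_cases hv : v = 0
  · subst hv
    simp only [Pi.zero_apply, mul_zero, Finset.sum_const_zero, sg_zero, if_pos rfl]
    rw [Finset.sum_const, Finset.card_univ, card_V]; simp
  · rw [if_neg hv]
    obtain ⟨i0, hi0⟩ : ∃ i, v i ≠ 0 := by
      by_contra h; push_neg at h; exact hv (funext fun i => h i)
    have hvi0 : v i0 = 1 := by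
      have : ∀ a : ZMod 2, a ≠ 0 → a = 1 := by decide
      exact this _ hi0
    set δ : Fin n → ZMod 2 := Pi.single i0 1 with hδ
    have key : ∀ z : Fin n → ZMod 2,
        sg (∑ i, (δ + z) i * v i) = - sg (∑ i, z i * v i) := by
      intro z
      have : (∑ i, (δ + z) i * v i) = (∑ i, δ i * v i) + ∑ i, z i * v i := by
        rw [← Finset.sum_add_distrib]
        exact Finset.sum_congr rfl fun i _ => by simp [add_mul]
      rw [this, sg_add]
      have : (∑ i, δ i * v i) = 1 := by
        rw [hδ]
        rw [Finset.sum_eq_single i0]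
        · simp [hvi0]
        · intro b _ hb; simp [Pi.single_eq_of_ne hb]
        · intro h; exact absurd (Finset.mem_univ i0) h
      rw [this, sg_one]; ring
    have he : ∑ z : Fin n → ZMod 2, sg (∑ i, z i * v i)
        = ∑ z : Fin n → ZMod 2, sg (∑ i, (δ + z) i * v i) := by
      exact (Fintype.sum_equiv (Equiv.addLeft δ) _ _ (fun z => rfl)).symm
    have := he
    simp only [key] at this
    rw [Finset.sum_neg_distrib] at this
    linear_combination (this : _) / 2

lemma pauli_apply {n : ℕ} (x z j k : Fin n → ZMod 2) :
    pauli x z j k = if j = k + x then sg (∑ i, z i * k i) else 0 := by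
  rw [pauli]; simp only [sg_sum]

lemma conj_pauli {n : ℕ} (x z j k : Fin n → ZMod 2) :
    (starRingEnd ℂ) (pauli x z j k) = pauli x z j k := by
  rw [pauli_apply]
  split <;> simp [conj_sg]

lemma add_self_zero {n : ℕ} (a : Fin n → ZMod 2) : a + a = 0 := by
  funext i
  have : ∀ b : ZMod 2, b + b = 0 := by decide
  exact this (a i)

lemma eq_of_add_eq_zero' {n : ℕ} {a b : Fin n → ZMod 2} (h : a + b = 0) : a = b := by
  have := congrArg (· + b) h
  simpa [add_assoc, add_self_zero] using this

lemma pauli_ortho {n : ℕ} (x z x' z' : Fin n → ZMod 2) :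
    ∑ d : Fin n → ZMod 2, ∑ db : Fin n → ZMod 2, pauli x z d db * pauli x' z' d db
      = if x = x' ∧ z = z' then (2 ^ n : ℂ) else 0 := by
  rw [Finset.sum_comm]
  simp only [pauli_apply, ite_mul, zero_mul, mul_ite, mul_zero]
  have step1 : ∀ db : Fin n → ZMod 2,
      (∑ d : Fin n → ZMod 2, if d = db + x' then (if d = db + x then
          sg (∑ i, z i * db i) * sg (∑ i, z' i * db i) else 0) else 0)
        = if x = x' then sg (∑ i, db i * (z + z') i) else 0 := by
    intro db
    rw [Finset.sum_eq_single (db + x')]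
    · by_cases hx : x = x'
      · subst hx
        rw [if_pos rfl, if_pos rfl, if_pos rfl, ← sg_add, ← Finset.sum_add_distrib]
        refine congrArg sg (Finset.sum_congr rfl fun i _ => ?_)
        simp [add_mul]; ring
      · rw [if_pos rfl, if_neg, if_neg hx]
        intro h
        exact hx (((add_right_inj _).mp h).symm)
    · intro b _ hb; rw [if_neg hb]
    · intro h; exact absurd (Finset.mem_univ _) h
  rw [Finset.sum_congr rfl fun db _ => step1 db]
  by_cases hx : x = x'
  · subst hx
    simp only [eq_self_iff_true, if_true, true_and]
    rw [sg_ortho]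
    by_cases hz : z = z'
    · subst hz
      rw [if_pos (add_self_zero z), if_pos rfl]
    · rw [if_neg, if_neg hz]
      intro h; exact hz (eq_of_add_eq_zero' h)
  · simp only [if_neg hx, Finset.sum_const_zero]
    rw [if_neg]; rintro ⟨h, -⟩; exact hx h

lemma entry_lemma {nA nB nC nD : ℕ}
    (U : Matrix ((Fin nC → ZMod 2) × (Fin nD → ZMod 2))
      ((Fin nA → ZMod 2) × (Fin nB → ZMod 2)) ℂ)
    (P : Matrix (Fin nA → ZMod 2) (Fin nA → ZMod 2) ℂ)
    (cc : Fin nC → ZMod 2) (d : Fin nD → ZMod 2)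
    (cb : Fin nC → ZMod 2) (db : Fin nD → ZMod 2) :
    (U * (P ⊗ₖ (1 : Matrix (Fin nB → ZMod 2) (Fin nB → ZMod 2) ℂ)) * Uᴴ) (cc, d) (cb, db)
      = ∑ a' : Fin nA → ZMod 2, ∑ b : Fin nB → ZMod 2, ∑ a : Fin nA → ZMod 2,
        U (cc, d) (a, b) * P a a' * (starRingEnd ℂ) (U (cb, db) (a', b)) := by
  simp only [Matrix.mul_apply, Matrix.conjTranspose_apply, Matrix.kroneckerMap_apply,
    Matrix.one_apply, Fintype.sum_prod_type, mul_ite, ite_mul, mul_zero, zero_mul,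
    mul_one, Finset.sum_ite_eq', Finset.mem_univ, if_true]
  exact Finset.sum_congr rfl fun a' _ => Finset.sum_congr rfl fun b _ => by
    rw [Finset.sum_mul]; rfl

noncomputable def Emat {nA : ℕ} (r rb : Fin nA → ZMod 2) :
    Matrix (Fin nA → ZMod 2) (Fin nA → ZMod 2) ℂ :=
  fun j k => if j = r ∧ k = rb then 1 else 0

lemma hE {nA : ℕ} (r rb : Fin nA → ZMod 2) :
    Emat r rb = (2 ^ nA : ℂ)⁻¹ •
      ∑ z : Fin nA → ZMod 2, sg (∑ i, z i * rb i) • pauli (r + rb) z := by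
  have h2 : (2 ^ nA : ℂ) ≠ 0 := by norm_num
  funext a a'
  simp only [Emat, Matrix.smul_apply, Matrix.sum_apply, smul_eq_mul, pauli_apply]
  by_cases h : a = a' + (r + rb)
  · have hsum : ∑ z : Fin nA → ZMod 2, sg (∑ i, z i * rb i) *
        (if a = a' + (r + rb) then sg (∑ i, z i * a' i) else 0)
        = if rb + a' = 0 then (2 ^ nA : ℂ) else 0 := by
      rw [← sg_ortho]
      refine Finset.sum_congr rfl fun z _ => ?_
      rw [if_pos h, ← sg_add, ← Finset.sum_add_distrib]
      congr 1
      exact Finset.sum_congr rfl fun i _ => by rw [← mul_add]; rfl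
    rw [hsum]
    by_cases hrb : a' = rb
    · subst hrb
      have har : a = r := by
        rw [h, add_comm r a', ← add_assoc, add_self_zero, zero_add]
      rw [if_pos ⟨har, rfl⟩, if_pos (add_self_zero a'), mul_comm]
      field_simp
    · rw [if_neg, if_neg, mul_zero]
      · intro hz
        exact hrb (eq_of_add_eq_zero' hz).symm
      · rintro ⟨-, hh⟩; exact hrb hh
  · have hsum : ∑ z : Fin nA → ZMod 2, sg (∑ i, z i * rb i) *
        (if a = a' + (r + rb) then sg (∑ i, z i * a' i) else 0) = 0 := by
      refine Finset.sum_eq_zero fun z _ => ?_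
      rw [if_neg h, mul_zero]
    rw [hsum, mul_zero, if_neg]
    rintro ⟨ha, hb⟩
    apply h
    rw [ha, hb, add_comm r rb, ← add_assoc, add_self_zero, zero_add]

lemma sum_kronecker' {l m p q : Type*} [Fintype l]
    (f : l → Matrix m m ℂ) (N : Matrix p q ℂ) :
    (∑ z, f z) ⊗ₖ N = ∑ z, (f z ⊗ₖ N) := by
  funext a b
  simp only [Matrix.kroneckerMap_apply, Matrix.sum_apply, Finset.sum_mul]

lemma key_lemma {nA nB nC nD : ℕ}
    (U : Matrix ((Fin nC → ZMod 2) × (Fin nD → ZMod 2))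
      ((Fin nA → ZMod 2) × (Fin nB → ZMod 2)) ℂ)
    (v : (Fin nA → ZMod 2) → (Fin nA → ZMod 2) → ℂ)
    (Pc : (Fin nA → ZMod 2) → (Fin nA → ZMod 2) → Matrix (Fin nC → ZMod 2) (Fin nC → ZMod 2) ℂ)
    (Pd : (Fin nA → ZMod 2) → (Fin nA → ZMod 2) → Matrix (Fin nD → ZMod 2) (Fin nD → ZMod 2) ℂ)
    (hC : ∀ x z, U * (pauli x z ⊗ₖ (1 : Matrix (Fin nB → ZMod 2) (Fin nB → ZMod 2) ℂ)) * Uᴴ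
        = v x z • (Pc x z ⊗ₖ Pd x z))
    (r rb : Fin nA → ZMod 2) (cc : Fin nC → ZMod 2) (d : Fin nD → ZMod 2)
    (cb : Fin nC → ZMod 2) (db : Fin nD → ZMod 2) :
    ∑ b : Fin nB → ZMod 2, U (cc, d) (r, b) * (starRingEnd ℂ) (U (cb, db) (rb, b))
      = (2 ^ nA : ℂ)⁻¹ * ∑ z : Fin nA → ZMod 2, sg (∑ i, z i * rb i) *
          (v (r + rb) z * (Pc (r + rb) z cc cb * Pd (r + rb) z d db)) := by
  have hm : U * (Emat r rb ⊗ₖ (1 : Matrix (Fin nB → ZMod 2) (Fin nB → ZMod 2) ℂ)) * Uᴴ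
      = (2 ^ nA : ℂ)⁻¹ • ∑ z : Fin nA → ZMod 2, sg (∑ i, z i * rb i) •
          (v (r + rb) z • (Pc (r + rb) z ⊗ₖ Pd (r + rb) z)) := by
    rw [hE r rb, Matrix.smul_kronecker, sum_kronecker']
    rw [Matrix.mul_smul, Matrix.smul_mul, Matrix.mul_sum, Matrix.sum_mul]
    congr 1
    refine Finset.sum_congr rfl fun z _ => ?_
    rw [Matrix.smul_kronecker, Matrix.mul_smul, Matrix.smul_mul, ← hC (r + rb) z]
  have h1 := entry_lemma U (Emat r rb) cc d cb db
  rw [hm] at h1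
  have hL : ∑ a' : Fin nA → ZMod 2, ∑ b : Fin nB → ZMod 2, ∑ a : Fin nA → ZMod 2,
      U (cc, d) (a, b) * Emat r rb a a' * (starRingEnd ℂ) (U (cb, db) (a', b))
      = ∑ b : Fin nB → ZMod 2, U (cc, d) (r, b) * (starRingEnd ℂ) (U (cb, db) (rb, b)) := by
    simp only [Emat, mul_ite, ite_mul, mul_one, mul_zero, zero_mul, ite_and]
    simp [Finset.sum_ite_eq, Finset.sum_ite_eq']
  rw [hL] at h1
  rw [← h1]
  simp only [Matrix.smul_apply, Matrix.sum_apply, smul_eq_mul, Matrix.kroneckerMap_apply]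

lemma sg_inj {a b : ZMod 2} (h : sg a = sg b) : a = b := by
  have h01 : ∀ a : ZMod 2, a = 0 ∨ a = 1 := by decide
  rcases h01 a with rfl | rfl <;> rcases h01 b with rfl | rfl <;> simp_all [sg_zero, sg_one] <;> norm_num at h

lemma inj_lemma {nA nB nC nD : ℕ}
    (U : Matrix ((Fin nC → ZMod 2) × (Fin nD → ZMod 2))
      ((Fin nA → ZMod 2) × (Fin nB → ZMod 2)) ℂ)
    (hU2 : Uᴴ * U = 1)
    (v v' : ℂ) (hv : ‖v‖ = 1)
    (K : Matrix ((Fin nC → ZMod 2) × (Fin nD → ZMod 2))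
      ((Fin nC → ZMod 2) × (Fin nD → ZMod 2)) ℂ)
    (x z z' : Fin nA → ZMod 2)
    (h1 : U * (pauli x z ⊗ₖ (1 : Matrix (Fin nB → ZMod 2) (Fin nB → ZMod 2) ℂ)) * Uᴴ = v • K)
    (h2 : U * (pauli x z' ⊗ₖ (1 : Matrix (Fin nB → ZMod 2) (Fin nB → ZMod 2) ℂ)) * Uᴴ = v' • K) :
    z = z' := by
  have cancel : ∀ N : Matrix ((Fin nA → ZMod 2) × (Fin nB → ZMod 2))
      ((Fin nA → ZMod 2) × (Fin nB → ZMod 2)) ℂ, Uᴴ * (U * N * Uᴴ) * U = N := by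
    intro N
    rw [Matrix.mul_assoc Uᴴ _ U, Matrix.mul_assoc (U * N) Uᴴ U, hU2, Matrix.mul_one,
      ← Matrix.mul_assoc, hU2, Matrix.one_mul]
  have e1 : v' • (U * (pauli x z ⊗ₖ (1 : Matrix (Fin nB → ZMod 2) (Fin nB → ZMod 2) ℂ)) * Uᴴ)
      = v • (U * (pauli x z' ⊗ₖ (1 : Matrix (Fin nB → ZMod 2) (Fin nB → ZMod 2) ℂ)) * Uᴴ) := by
    rw [h1, h2, smul_smul, smul_smul, mul_comm]
  have e2 := congrArg (fun M => Uᴴ * M * U) e1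
  simp only [Matrix.mul_smul, Matrix.smul_mul] at e2
  rw [cancel, cancel] at e2
  have hvne : v ≠ 0 := by
    intro h; rw [h] at hv; simp at hv
  have ent : ∀ k : Fin nA → ZMod 2,
      v' * sg (∑ i, z i * k i) = v * sg (∑ i, z' i * k i) := by
    intro k
    have := congrFun (congrFun e2 (k + x, fun _ => 0)) (k, fun _ => 0)
    simpa [Matrix.smul_apply, Matrix.kroneckerMap_apply, Matrix.one_apply,
      pauli_apply, smul_eq_mul] using this
  have hc : v' = v := by
    have := ent 0
    simpa [sg_zero] using this
  subst hc
  funext i0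
  have := ent (Pi.single i0 1 : Fin nA → ZMod 2)
  have hz : ∑ i, z i * (Pi.single i0 1 : Fin nA → ZMod 2) i = z i0 := by
    rw [Finset.sum_eq_single i0]
    · simp
    · intro b _ hb; simp [Pi.single_eq_of_ne hb]
    · intro h; exact absurd (Finset.mem_univ i0) h
  have hz' : ∑ i, z' i * (Pi.single i0 1 : Fin nA → ZMod 2) i = z' i0 := by
    rw [Finset.sum_eq_single i0]
    · simp
    · intro b _ hb; simp [Pi.single_eq_of_ne hb]
    · intro h; exact absurd (Finset.mem_univ i0) h
  rw [hz, hz'] at this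
  exact sg_inj (mul_left_cancel₀ hvne this)


lemma swap3 {M : Type*} [AddCommMonoid M] {a b : Type*} [Fintype a] [Fintype b]
    (f : a → a → b → M) :
    ∑ x : a, ∑ y : a, ∑ z : b, f x y z = ∑ z : b, ∑ x : a, ∑ y : a, f x y z := by
  calc ∑ x : a, ∑ y : a, ∑ z : b, f x y z
      = ∑ x : a, ∑ z : b, ∑ y : a, f x y z :=
        Finset.sum_congr rfl fun x _ => Finset.sum_comm
    _ = ∑ z : b, ∑ x : a, ∑ y : a, f x y z := Finset.sum_comm

lemma swap4 {M : Type*} [AddCommMonoid M] {a b : Type*} [Fintype a] [Fintype b]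
    (f : a → a → b → b → M) :
    ∑ x : a, ∑ y : a, ∑ z : b, ∑ w : b, f x y z w
      = ∑ z : b, ∑ w : b, ∑ x : a, ∑ y : a, f x y z w := by
  calc ∑ x : a, ∑ y : a, ∑ z : b, ∑ w : b, f x y z w
      = ∑ x : a, ∑ z : b, ∑ y : a, ∑ w : b, f x y z w :=
        Finset.sum_congr rfl fun x _ => Finset.sum_comm
    _ = ∑ z : b, ∑ x : a, ∑ y : a, ∑ w : b, f x y z w := Finset.sum_comm
    _ = ∑ z : b, ∑ x : a, ∑ w : b, ∑ y : a, f x y z w :=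
        Finset.sum_congr rfl fun z _ => Finset.sum_congr rfl fun x _ => Finset.sum_comm
    _ = ∑ z : b, ∑ w : b, ∑ x : a, ∑ y : a, f x y z w :=
        Finset.sum_congr rfl fun z _ => Finset.sum_comm


noncomputable def gam (nA nB nD : ℕ) : ℝ :=
  (Real.sqrt (2 ^ nD))⁻¹ * ((2 ^ nA) * Real.sqrt (2 ^ nB))⁻¹ * (2 ^ nA)⁻¹ * 2 ^ nD

noncomputable def Wfun {nA nC nD : ℕ} (cf : (Fin nA → ZMod 2) → (Fin nA → ZMod 2) → ℂ)
    (xc zc : (Fin nA → ZMod 2) → (Fin nA → ZMod 2) → (Fin nC → ZMod 2))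
    (xd zd : (Fin nA → ZMod 2) → (Fin nA → ZMod 2) → (Fin nD → ZMod 2))
    (xq zq : Fin nD → ZMod 2)
    (r : Fin nA → ZMod 2) (cc cb : Fin nC → ZMod 2) (rb : Fin nA → ZMod 2) : ℂ :=
  ∑ z : Fin nA → ZMod 2,
    if xq = xd (r + rb) z ∧ zq = zd (r + rb) z then
      sg (∑ i, z i * rb i) * cf (r + rb) z *
        pauli (xc (r + rb) z) (zc (r + rb) z) cc cb
    else 0

lemma amp_eq {nA nB nC nD : ℕ}
    (U : Matrix ((Fin nC → ZMod 2) × (Fin nD → ZMod 2))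
      ((Fin nA → ZMod 2) × (Fin nB → ZMod 2)) ℂ)
    (cf : (Fin nA → ZMod 2) → (Fin nA → ZMod 2) → ℂ)
    (xc zc : (Fin nA → ZMod 2) → (Fin nA → ZMod 2) → (Fin nC → ZMod 2))
    (xd zd : (Fin nA → ZMod 2) → (Fin nA → ZMod 2) → (Fin nD → ZMod 2))
    (hCE : ∀ x z : Fin nA → ZMod 2,
      U * (pauli x z ⊗ₖ (1 : Matrix (Fin nB → ZMod 2) (Fin nB → ZMod 2) ℂ)) * Uᴴ
        = cf x z • (pauli (xc x z) (zc x z) ⊗ₖ pauli (xd x z) (zd x z)))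
    (xq zq : Fin nD → ZMod 2)
    (r : Fin nA → ZMod 2) (cc cb : Fin nC → ZMod 2) (rb : Fin nA → ZMod 2) :
    (∑ d : Fin nD → ZMod 2, ∑ db : Fin nD → ZMod 2,
      (starRingEnd ℂ) (((Real.sqrt (2 ^ nD) : ℂ))⁻¹ * pauli xq zq d db) *
        psiYK nA nB nC nD U r (cc, d) (db, cb) rb)
      = (gam nA nB nD : ℂ) * Wfun cf xc zc xd zd xq zq r cc cb rb := by
  have hkey := fun (d db : Fin nD → ZMod 2) => key_lemma U cf
    (fun x z => pauli (xc x z) (zc x z)) (fun x z => pauli (xd x z) (zd x z))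
    hCE r rb cc d cb db
  have step1 : ∀ d db : Fin nD → ZMod 2,
      (starRingEnd ℂ) (((Real.sqrt (2 ^ nD) : ℂ))⁻¹ * pauli xq zq d db) *
        psiYK nA nB nC nD U r (cc, d) (db, cb) rb
      = ∑ z : Fin nA → ZMod 2,
          (((Real.sqrt (2 ^ nD) : ℂ))⁻¹ * ((2 ^ nA : ℂ) * (Real.sqrt (2 ^ nB) : ℂ))⁻¹ *
            (2 ^ nA : ℂ)⁻¹) *
          (pauli xq zq d db *
            (sg (∑ i, z i * rb i) *
              (cf (r + rb) z * (pauli (xc (r + rb) z) (zc (r + rb) z) cc cb *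
                pauli (xd (r + rb) z) (zd (r + rb) z) d db)))) := by
    intro d db
    rw [psiYK]
    have : (starRingEnd ℂ) (((Real.sqrt (2 ^ nD) : ℂ))⁻¹ * pauli xq zq d db)
        = ((Real.sqrt (2 ^ nD) : ℂ))⁻¹ * pauli xq zq d db := by
      rw [_root_.map_mul, map_inv₀, Complex.conj_ofReal, conj_pauli]
    rw [this]
    show _ * (_ * ∑ b : Fin nB → ZMod 2,
        U (cc, d) (r, b) * (starRingEnd ℂ) (U (cb, db) (rb, b))) = _
    rw [hkey d db]
    simp only [Finset.mul_sum]
    refine Finset.sum_congr rfl fun z _ => ?_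
    ring
  rw [Finset.sum_congr rfl fun d (_ : d ∈ Finset.univ) =>
    Finset.sum_congr rfl fun db (_ : db ∈ Finset.univ) => step1 d db]
  rw [swap3]
  rw [Wfun, Finset.mul_sum]
  refine Finset.sum_congr rfl fun z _ => ?_
  have hfac : ∀ d : Fin nD → ZMod 2, (∑ db : Fin nD → ZMod 2,
      (((Real.sqrt (2 ^ nD) : ℂ))⁻¹ * ((2 ^ nA : ℂ) * (Real.sqrt (2 ^ nB) : ℂ))⁻¹ *
            (2 ^ nA : ℂ)⁻¹) *
          (pauli xq zq d db *
            (sg (∑ i, z i * rb i) *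
              (cf (r + rb) z * (pauli (xc (r + rb) z) (zc (r + rb) z) cc cb *
                pauli (xd (r + rb) z) (zd (r + rb) z) d db)))))
      = ((((Real.sqrt (2 ^ nD) : ℂ))⁻¹ * ((2 ^ nA : ℂ) * (Real.sqrt (2 ^ nB) : ℂ))⁻¹ *
            (2 ^ nA : ℂ)⁻¹) * (sg (∑ i, z i * rb i) *
              (cf (r + rb) z * pauli (xc (r + rb) z) (zc (r + rb) z) cc cb))) *
          ∑ db : Fin nD → ZMod 2,
            pauli xq zq d db * pauli (xd (r + rb) z) (zd (r + rb) z) d db := by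
    intro d
    rw [Finset.mul_sum]
    exact Finset.sum_congr rfl fun db _ => by ring
  rw [Finset.sum_congr rfl fun d (_ : d ∈ Finset.univ) => hfac d, ← Finset.mul_sum,
    pauli_ortho]
  by_cases hcond : xq = xd (r + rb) z ∧ zq = zd (r + rb) z
  · rw [if_pos hcond, if_pos hcond, gam]
    have h0 : (0:ℝ) ≤ (2:ℝ) ^ nD := by positivity
    push_cast
    ring
  · rw [if_neg hcond, if_neg hcond, mul_zero, mul_zero]


lemma csum_eq {nA nB nC nD : ℕ}
    (U : Matrix ((Fin nC → ZMod 2) × (Fin nD → ZMod 2))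
      ((Fin nA → ZMod 2) × (Fin nB → ZMod 2)) ℂ)
    (hU2 : Uᴴ * U = 1)
    (cf : (Fin nA → ZMod 2) → (Fin nA → ZMod 2) → ℂ)
    (xc zc : (Fin nA → ZMod 2) → (Fin nA → ZMod 2) → (Fin nC → ZMod 2))
    (xd zd : (Fin nA → ZMod 2) → (Fin nA → ZMod 2) → (Fin nD → ZMod 2))
    (hCE : ∀ x z : Fin nA → ZMod 2,
      U * (pauli x z ⊗ₖ (1 : Matrix (Fin nB → ZMod 2) (Fin nB → ZMod 2) ℂ)) * Uᴴ
        = cf x z • (pauli (xc x z) (zc x z) ⊗ₖ pauli (xd x z) (zd x z)))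
    (hnorm : ∀ x z : Fin nA → ZMod 2, ‖cf x z‖ = 1)
    (xq zq : Fin nD → ZMod 2) (r rb : Fin nA → ZMod 2) :
    ∑ cc : Fin nC → ZMod 2, ∑ cb : Fin nC → ZMod 2,
      Wfun cf xc zc xd zd xq zq r cc cb rb *
        (starRingEnd ℂ) (Wfun cf xc zc xd zd xq zq r cc cb rb)
      = (2 ^ nC : ℂ) * ∑ z : Fin nA → ZMod 2,
          (if xq = xd (r + rb) z ∧ zq = zd (r + rb) z then 1 else 0) := by
  classical
  have hone : ∀ z, cf (r + rb) z * (starRingEnd ℂ) (cf (r + rb) z) = 1 := by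
    intro z
    rw [Complex.mul_conj, Complex.normSq_eq_norm_sq, hnorm, one_pow,
      Complex.ofReal_one]
  have hconjW : ∀ cc cb : Fin nC → ZMod 2,
      (starRingEnd ℂ) (Wfun cf xc zc xd zd xq zq r cc cb rb)
        = ∑ z : Fin nA → ZMod 2,
            if xq = xd (r + rb) z ∧ zq = zd (r + rb) z then
              sg (∑ i, z i * rb i) * (starRingEnd ℂ) (cf (r + rb) z) *
                pauli (xc (r + rb) z) (zc (r + rb) z) cc cb
            else 0 := by
    intro cc cb
    rw [Wfun, map_sum]
    refine Finset.sum_congr rfl fun z _ => ?_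
    rw [apply_ite (starRingEnd ℂ), map_zero, _root_.map_mul, _root_.map_mul, conj_sg,
      conj_pauli]
  have hWW : ∀ cc cb : Fin nC → ZMod 2,
      Wfun cf xc zc xd zd xq zq r cc cb rb *
        (starRingEnd ℂ) (Wfun cf xc zc xd zd xq zq r cc cb rb)
      = ∑ z : Fin nA → ZMod 2, ∑ z' : Fin nA → ZMod 2,
          (if xq = xd (r + rb) z ∧ zq = zd (r + rb) z then
              sg (∑ i, z i * rb i) * cf (r + rb) z *
                pauli (xc (r + rb) z) (zc (r + rb) z) cc cb
            else 0) *
          (if xq = xd (r + rb) z' ∧ zq = zd (r + rb) z' then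
              sg (∑ i, z' i * rb i) * (starRingEnd ℂ) (cf (r + rb) z') *
                pauli (xc (r + rb) z') (zc (r + rb) z') cc cb
            else 0) := by
    intro cc cb
    rw [hconjW, Wfun, Finset.sum_mul_sum]
  rw [Finset.sum_congr rfl fun cc (_ : cc ∈ Finset.univ) =>
    Finset.sum_congr rfl fun cb (_ : cb ∈ Finset.univ) => hWW cc cb]
  rw [swap4]
  have hinner : ∀ z z' : Fin nA → ZMod 2,
      (∑ cc : Fin nC → ZMod 2, ∑ cb : Fin nC → ZMod 2,
        (if xq = xd (r + rb) z ∧ zq = zd (r + rb) z then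
            sg (∑ i, z i * rb i) * cf (r + rb) z *
              pauli (xc (r + rb) z) (zc (r + rb) z) cc cb
          else 0) *
        (if xq = xd (r + rb) z' ∧ zq = zd (r + rb) z' then
            sg (∑ i, z' i * rb i) * (starRingEnd ℂ) (cf (r + rb) z') *
              pauli (xc (r + rb) z') (zc (r + rb) z') cc cb
          else 0))
      = if (xq = xd (r + rb) z ∧ zq = zd (r + rb) z) ∧
            (xq = xd (r + rb) z' ∧ zq = zd (r + rb) z') then
          (sg (∑ i, z i * rb i) * cf (r + rb) z) *
            (sg (∑ i, z' i * rb i) * (starRingEnd ℂ) (cf (r + rb) z')) *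
            (if xc (r + rb) z = xc (r + rb) z' ∧ zc (r + rb) z = zc (r + rb) z' then
              (2 ^ nC : ℂ) else 0)
        else 0 := by
    intro z z'
    by_cases hz : xq = xd (r + rb) z ∧ zq = zd (r + rb) z
    · by_cases hz' : xq = xd (r + rb) z' ∧ zq = zd (r + rb) z'
      · rw [if_pos ⟨hz, hz'⟩]
        simp only [if_pos hz, if_pos hz']
        have hfac : ∀ cc : Fin nC → ZMod 2,
            (∑ cb : Fin nC → ZMod 2,
              (sg (∑ i, z i * rb i) * cf (r + rb) z *
                  pauli (xc (r + rb) z) (zc (r + rb) z) cc cb) *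
              (sg (∑ i, z' i * rb i) * (starRingEnd ℂ) (cf (r + rb) z') *
                  pauli (xc (r + rb) z') (zc (r + rb) z') cc cb))
            = ((sg (∑ i, z i * rb i) * cf (r + rb) z) *
                (sg (∑ i, z' i * rb i) * (starRingEnd ℂ) (cf (r + rb) z'))) *
              ∑ cb : Fin nC → ZMod 2,
                pauli (xc (r + rb) z) (zc (r + rb) z) cc cb *
                  pauli (xc (r + rb) z') (zc (r + rb) z') cc cb := by
          intro cc
          rw [Finset.mul_sum]
          exact Finset.sum_congr rfl fun cb _ => by ring
        rw [Finset.sum_congr rfl fun cc (_ : cc ∈ Finset.univ) => hfac cc,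
          ← Finset.mul_sum, pauli_ortho]
      · simp only [if_neg hz', mul_zero, Finset.sum_const_zero]
        rw [if_neg]
        rintro ⟨-, h⟩
        exact hz' h
    · simp only [if_neg hz, zero_mul, Finset.sum_const_zero]
      rw [if_neg]
      rintro ⟨h, -⟩
      exact hz h
  rw [Finset.sum_congr rfl fun z (_ : z ∈ Finset.univ) =>
    Finset.sum_congr rfl fun z' (_ : z' ∈ Finset.univ) => hinner z z']
  have hdiag : ∀ z : Fin nA → ZMod 2,
      (∑ z' : Fin nA → ZMod 2,
        if (xq = xd (r + rb) z ∧ zq = zd (r + rb) z) ∧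
            (xq = xd (r + rb) z' ∧ zq = zd (r + rb) z') then
          (sg (∑ i, z i * rb i) * cf (r + rb) z) *
            (sg (∑ i, z' i * rb i) * (starRingEnd ℂ) (cf (r + rb) z')) *
            (if xc (r + rb) z = xc (r + rb) z' ∧ zc (r + rb) z = zc (r + rb) z' then
              (2 ^ nC : ℂ) else 0)
        else 0)
      = if xq = xd (r + rb) z ∧ zq = zd (r + rb) z then (2 ^ nC : ℂ) else 0 := by
    intro z
    rw [Finset.sum_eq_single z]
    · by_cases hz : xq = xd (r + rb) z ∧ zq = zd (r + rb) z
      · rw [if_pos ⟨hz, hz⟩, if_pos ⟨rfl, rfl⟩, if_pos hz]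
        have : (sg (∑ i, z i * rb i) * cf (r + rb) z) *
            (sg (∑ i, z i * rb i) * (starRingEnd ℂ) (cf (r + rb) z)) = 1 := by
          have h1 := sg_mul_self (∑ i, z i * rb i)
          have h2 := hone z
          calc (sg (∑ i, z i * rb i) * cf (r + rb) z) *
              (sg (∑ i, z i * rb i) * (starRingEnd ℂ) (cf (r + rb) z))
              = (sg (∑ i, z i * rb i) * sg (∑ i, z i * rb i)) *
                (cf (r + rb) z * (starRingEnd ℂ) (cf (r + rb) z)) := by ring
            _ = 1 := by rw [h1, h2, one_mul]
        rw [this, one_mul]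
      · rw [if_neg, if_neg hz]
        rintro ⟨h, -⟩
        exact hz h
    · intro z' _ hzz'
      by_cases hq : (xq = xd (r + rb) z ∧ zq = zd (r + rb) z) ∧
          (xq = xd (r + rb) z' ∧ zq = zd (r + rb) z')
      · rw [if_pos hq, if_neg, mul_zero]
        rintro ⟨hxc, hzc⟩
        apply hzz'
        have hxd : xd (r + rb) z = xd (r + rb) z' := hq.1.1.symm.trans hq.2.1
        have hzd : zd (r + rb) z = zd (r + rb) z' := hq.1.2.symm.trans hq.2.2
        have h2' := hCE (r + rb) z'
        rw [← hxc, ← hzc, ← hxd, ← hzd] at h2'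
        exact (inj_lemma U hU2 (cf (r + rb) z) (cf (r + rb) z') (hnorm (r + rb) z)
          _ (r + rb) z z' (hCE (r + rb) z) h2').symm
      · rw [if_neg hq]
    · intro h; exact absurd (Finset.mem_univ z) h
  rw [Finset.sum_congr rfl fun z (_ : z ∈ Finset.univ) => hdiag z, Finset.mul_sum]
  refine Finset.sum_congr rfl fun z _ => ?_
  by_cases hz : xq = xd (r + rb) z ∧ zq = zd (r + rb) z
  · rw [if_pos hz, if_pos hz, mul_one]
  · rw [if_neg hz, if_neg hz, mul_zero]

/-- In the Clifford Hayden–Preskill problem, the probability of the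
generalized Bell-measurement outcome `|Q_D⟩ = (Q_D ⊗ I)|EPR⟩_{DD̄}` is
`N_{Q_D}/d_A²`, where `N_{Q_D}` counts Pauli operators `P_A` with
`Λ_D(P_A) = Q_D` (as projective Paulis). -/
theorem stmt10 (nA nB nC nD : ℕ)
    (U : Matrix ((Fin nC → ZMod 2) × (Fin nD → ZMod 2))
      ((Fin nA → ZMod 2) × (Fin nB → ZMod 2)) ℂ)
    (hU1 : U * Uᴴ = 1) (hU2 : Uᴴ * U = 1)
    (c : (Fin nA → ZMod 2) → (Fin nA → ZMod 2) → ℂ)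
    (xc zc : (Fin nA → ZMod 2) → (Fin nA → ZMod 2) → (Fin nC → ZMod 2))
    (xd zd : (Fin nA → ZMod 2) → (Fin nA → ZMod 2) → (Fin nD → ZMod 2))
    (hClif : ∀ x z : Fin nA → ZMod 2, ‖c x z‖ = 1 ∧
      U * (pauli x z ⊗ₖ (1 : Matrix (Fin nB → ZMod 2) (Fin nB → ZMod 2) ℂ)) * Uᴴ
        = c x z • (pauli (xc x z) (zc x z) ⊗ₖ pauli (xd x z) (zd x z)))
    (xq zq : Fin nD → ZMod 2) :
    (∑ r : Fin nA → ZMod 2, ∑ cc : Fin nC → ZMod 2,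
      ∑ cb : Fin nC → ZMod 2, ∑ rb : Fin nA → ZMod 2,
        Complex.normSq (∑ d : Fin nD → ZMod 2, ∑ db : Fin nD → ZMod 2,
          (starRingEnd ℂ) (((Real.sqrt (2 ^ nD) : ℂ))⁻¹ * pauli xq zq d db) *
            psiYK nA nB nC nD U r (cc, d) (db, cb) rb))
      = (Fintype.card {PA : (Fin nA → ZMod 2) × (Fin nA → ZMod 2) //
            xd PA.1 PA.2 = xq ∧ zd PA.1 PA.2 = zq} : ℝ) / (2 ^ nA) ^ 2 := by
  classical
  have hCE : ∀ x z : Fin nA → ZMod 2,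
      U * (pauli x z ⊗ₖ (1 : Matrix (Fin nB → ZMod 2) (Fin nB → ZMod 2) ℂ)) * Uᴴ
        = c x z • (pauli (xc x z) (zc x z) ⊗ₖ pauli (xd x z) (zd x z)) :=
    fun x z => (hClif x z).2
  have hnorm : ∀ x z : Fin nA → ZMod 2, ‖c x z‖ = 1 := fun x z => (hClif x z).1
  -- count function
  set cnt : (Fin nA → ZMod 2) → ℝ := fun x => ∑ z : Fin nA → ZMod 2,
    (if xq = xd x z ∧ zq = zd x z then (1 : ℝ) else 0) with hcnt
  -- Step A+B: amplitude rewrite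
  have stepA : ∀ r cc cb rb, Complex.normSq (∑ d : Fin nD → ZMod 2, ∑ db : Fin nD → ZMod 2,
        (starRingEnd ℂ) (((Real.sqrt (2 ^ nD) : ℂ))⁻¹ * pauli xq zq d db) *
          psiYK nA nB nC nD U r (cc, d) (db, cb) rb)
      = gam nA nB nD ^ 2 * Complex.normSq (Wfun c xc zc xd zd xq zq r cc cb rb) := by
    intro r cc cb rb
    rw [amp_eq U c xc zc xd zd hCE xq zq r cc cb rb, Complex.normSq_mul,
      Complex.normSq_ofReal, sq]
  -- Step D: cc,cb sum
  have stepD : ∀ r rb, (∑ cc : Fin nC → ZMod 2, ∑ cb : Fin nC → ZMod 2,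
        Complex.normSq (Wfun c xc zc xd zd xq zq r cc cb rb))
      = 2 ^ nC * cnt (r + rb) := by
    intro r rb
    have hc := csum_eq U hU2 c xc zc xd zd hCE hnorm xq zq r rb
    apply Complex.ofReal_injective
    have hcast : (((∑ cc : Fin nC → ZMod 2, ∑ cb : Fin nC → ZMod 2,
          Complex.normSq (Wfun c xc zc xd zd xq zq r cc cb rb)) : ℝ) : ℂ)
        = ∑ cc : Fin nC → ZMod 2, ∑ cb : Fin nC → ZMod 2,
            Wfun c xc zc xd zd xq zq r cc cb rb *
              (starRingEnd ℂ) (Wfun c xc zc xd zd xq zq r cc cb rb) := by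
      push_cast
      exact Finset.sum_congr rfl fun cc _ => Finset.sum_congr rfl fun cb _ =>
        (Complex.mul_conj _).symm
    rw [hcast, hc, hcnt]
    push_cast
    refine congrArg _ (Finset.sum_congr rfl fun z _ => ?_)
    rw [apply_ite (fun x : ℝ => (x : ℂ))]
    push_cast
    rfl
  -- counting
  have hN : ∑ x : Fin nA → ZMod 2, cnt x
      = (Fintype.card {PA : (Fin nA → ZMod 2) × (Fin nA → ZMod 2) //
          xd PA.1 PA.2 = xq ∧ zd PA.1 PA.2 = zq} : ℝ) := by
    rw [Fintype.card_subtype, Finset.card_filter]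
    push_cast
    simp only [hcnt]
    rw [Fintype.sum_prod_type]
    refine Finset.sum_congr rfl fun x _ => Finset.sum_congr rfl fun z _ => ?_
    by_cases h : xd x z = xq ∧ zd x z = zq
    · rw [if_pos ⟨h.1.symm, h.2.symm⟩, if_pos h]
    · rw [if_neg, if_neg h]
      rintro ⟨h1, h2⟩
      exact h ⟨h1.symm, h2.symm⟩
  -- cards
  have hcard : (2 : ℝ) ^ nC * 2 ^ nD = 2 ^ nA * 2 ^ nB := by
    have h := Matrix.square_of_invertible U Uᴴ hU1 hU2
    rw [Fintype.card_prod, Fintype.card_prod, card_V, card_V, card_V, card_V] at h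
    exact_mod_cast h
  -- assemble
  calc (∑ r : Fin nA → ZMod 2, ∑ cc : Fin nC → ZMod 2,
      ∑ cb : Fin nC → ZMod 2, ∑ rb : Fin nA → ZMod 2,
        Complex.normSq (∑ d : Fin nD → ZMod 2, ∑ db : Fin nD → ZMod 2,
          (starRingEnd ℂ) (((Real.sqrt (2 ^ nD) : ℂ))⁻¹ * pauli xq zq d db) *
            psiYK nA nB nC nD U r (cc, d) (db, cb) rb))
      = ∑ r : Fin nA → ZMod 2, ∑ cc : Fin nC → ZMod 2,
          ∑ cb : Fin nC → ZMod 2, ∑ rb : Fin nA → ZMod 2,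
            gam nA nB nD ^ 2 * Complex.normSq (Wfun c xc zc xd zd xq zq r cc cb rb) := by
        exact Finset.sum_congr rfl fun r _ => Finset.sum_congr rfl fun cc _ =>
          Finset.sum_congr rfl fun cb _ => Finset.sum_congr rfl fun rb _ =>
            stepA r cc cb rb
    _ = gam nA nB nD ^ 2 * ∑ r : Fin nA → ZMod 2, ∑ cc : Fin nC → ZMod 2,
          ∑ cb : Fin nC → ZMod 2, ∑ rb : Fin nA → ZMod 2,
            Complex.normSq (Wfun c xc zc xd zd xq zq r cc cb rb) := by
        simp only [← Finset.mul_sum]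
    _ = gam nA nB nD ^ 2 * ∑ r : Fin nA → ZMod 2, ∑ rb : Fin nA → ZMod 2,
          ∑ cc : Fin nC → ZMod 2, ∑ cb : Fin nC → ZMod 2,
            Complex.normSq (Wfun c xc zc xd zd xq zq r cc cb rb) := by
        refine congrArg _ (Finset.sum_congr rfl fun r _ => ?_)
        exact swap3 (fun cc cb rb => Complex.normSq (Wfun c xc zc xd zd xq zq r cc cb rb))
    _ = gam nA nB nD ^ 2 * ∑ r : Fin nA → ZMod 2, ∑ rb : Fin nA → ZMod 2,
          2 ^ nC * cnt (r + rb) := by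
        refine congrArg _ (Finset.sum_congr rfl fun r _ =>
          Finset.sum_congr rfl fun rb _ => ?_)
        exact stepD r rb
    _ = gam nA nB nD ^ 2 * (2 ^ nC * (2 ^ nA *
          (Fintype.card {PA : (Fin nA → ZMod 2) × (Fin nA → ZMod 2) //
            xd PA.1 PA.2 = xq ∧ zd PA.1 PA.2 = zq} : ℝ))) := by
        refine congrArg _ ?_
        have hre : ∀ r : Fin nA → ZMod 2, ∑ rb : Fin nA → ZMod 2, cnt (r + rb)
            = ∑ x : Fin nA → ZMod 2, cnt x :=
          fun r => Fintype.sum_equiv (Equiv.addLeft r) _ _ (fun rb => rfl)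
        calc ∑ r : Fin nA → ZMod 2, ∑ rb : Fin nA → ZMod 2, 2 ^ nC * cnt (r + rb)
            = ∑ r : Fin nA → ZMod 2, 2 ^ nC * ∑ rb : Fin nA → ZMod 2, cnt (r + rb) := by
              simp only [← Finset.mul_sum]
          _ = ∑ r : Fin nA → ZMod 2, 2 ^ nC * ∑ x : Fin nA → ZMod 2, cnt x := by
              exact Finset.sum_congr rfl fun r _ => by rw [hre r]
          _ = 2 ^ nA * (2 ^ nC * ∑ x : Fin nA → ZMod 2, cnt x) := by
              rw [Finset.sum_const, Finset.card_univ, card_V, nsmul_eq_mul]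
              push_cast
              ring
          _ = 2 ^ nC * (2 ^ nA *
              (Fintype.card {PA : (Fin nA → ZMod 2) × (Fin nA → ZMod 2) //
                xd PA.1 PA.2 = xq ∧ zd PA.1 PA.2 = zq} : ℝ)) := by
              rw [hN]; ring
    _ = (Fintype.card {PA : (Fin nA → ZMod 2) × (Fin nA → ZMod 2) //
            xd PA.1 PA.2 = xq ∧ zd PA.1 PA.2 = zq} : ℝ) / (2 ^ nA) ^ 2 := by
        have h0D : (0 : ℝ) ≤ 2 ^ nD := by positivity
        have h0B : (0 : ℝ) ≤ 2 ^ nB := by positivity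
        have hg : gam nA nB nD ^ 2 = (2 : ℝ) ^ nD / ((2 ^ nB) * (2 ^ nA) ^ 4) := by
          rw [gam]
          rw [mul_pow, mul_pow, mul_pow, inv_pow, inv_pow, mul_pow,
            Real.sq_sqrt h0D, Real.sq_sqrt h0B]
          field_simp
        rw [hg]
        set N : ℝ := (Fintype.card {PA : (Fin nA → ZMod 2) × (Fin nA → ZMod 2) //
            xd PA.1 PA.2 = xq ∧ zd PA.1 PA.2 = zq} : ℝ)
        have h2A : (2 : ℝ) ^ nA ≠ 0 := by positivity
        have h2B : (2 : ℝ) ^ nB ≠ 0 := by positivity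
        rw [div_mul_eq_mul_div, div_eq_div_iff (by positivity) (by positivity)]
        linear_combination (N * (2 : ℝ) ^ nA * 2 ^ nA * 2 ^ nA) * hcard
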